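/- Let d ≥ 2, R ≥ r > 0, δ > 0, and let A be a nonempty closed subset of the closed Euclidean ball of radius R centered at the origin in ℝ^d. Then λ(A_{⊕(r+δ)} \ A_{⊕r}) ≤ ((R + r/2)^d / (r/2)^d) · 2^{d−1} ω_d ((r+δ)^d − r^d), and the upper surface area of A_{⊕r} satisfies λ̄(∂A_{⊕r}) ≤ ((R + r/2)^d / (r/2)^d) · 2^{d−1} d ω_d r^{d−1}. -/

import Mathlib

open MeasureTheory Set Filter
open scoped ENNReal Pointwise
open Metric

/-- The closed unit Euclidean ball in `ℝ^d`. -/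
noncomputable def unitBall (d : ℕ) : Set (EuclideanSpace ℝ (Fin d)) := Metric.closedBall 0 1

/-- The upper `K`-surface area of `A`:
`λ̄_K(∂A) = limsup_{δ→0⁺} (λ(A ⊕ δK) − λ(A))/δ`. -/
noncomputable def upperSurf {d : ℕ} (K A : Set (EuclideanSpace ℝ (Fin d))) : ℝ≥0∞ :=
  Filter.limsup (fun δ : ℝ => (volume (A + δ • K) - volume A) / ENNReal.ofReal δ)
    (nhdsWithin 0 (Set.Ioi 0))

/-- `ω_d = π^{d/2}/Γ(1+d/2)`, the volume of the unit Euclidean ball in `ℝ^d`. -/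
noncomputable def omegaVol (d : ℕ) : ℝ := Real.pi ^ ((d : ℝ) / 2) / Real.Gamma (1 + (d : ℝ) / 2)



lemma scaling_lemma (d : ℕ) {ρ ρ' : ℝ} (hρ : 0 < ρ) (h : ρ ≤ ρ')
    (t : Finset (EuclideanSpace ℝ (Fin d))) :
    volume (⋃ x ∈ t, closedBall x ρ') ≤
      ENNReal.ofReal ((ρ' / ρ) ^ d) * volume (⋃ x ∈ t, closedBall x ρ) := by
  classical
  set c : ℝ := ρ' / ρ with hc
  have hρ' : 0 < ρ' := lt_of_lt_of_le hρ h
  have hc1 : 1 ≤ c := (one_le_div hρ).2 h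
  have hc0 : 0 < c := lt_of_lt_of_le one_pos hc1
  have hcr : c⁻¹ * ρ' = ρ := by rw [hc, inv_div]; field_simp
  have hinv : c⁻¹ ≤ 1 := by
    rw [← inv_one]; exact inv_anti₀ one_pos hc1
  induction t using Finset.induction_on with
  | empty => simp
  | @insert a t ha IH =>
      set U' : Set (EuclideanSpace ℝ (Fin d)) := ⋃ x ∈ t, closedBall x ρ' with hU'
      set U : Set (EuclideanSpace ℝ (Fin d)) := ⋃ x ∈ t, closedBall x ρ with hU
      have hUm : MeasurableSet U :=
        t.measurableSet_biUnion (fun _ _ => measurableSet_closedBall)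
      have hU'm : MeasurableSet U' :=
        t.measurableSet_biUnion (fun _ _ => measurableSet_closedBall)
      -- key inclusion
      have key : closedBall a ρ' \ U' ⊆
          (fun w => (a - c • a) +ᵥ c • w) '' (closedBall a ρ \ U) := by
        rintro z ⟨hz1, hz2⟩
        refine ⟨a + c⁻¹ • (z - a), ⟨?_, ?_⟩, ?_⟩
        · rw [mem_closedBall, dist_eq_norm]
          have : a + c⁻¹ • (z - a) - a = c⁻¹ • (z - a) := by abel
          rw [this, norm_smul, norm_inv, Real.norm_eq_abs, abs_of_pos hc0]
          rw [mem_closedBall, dist_eq_norm] at hz1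
          calc c⁻¹ * ‖z - a‖ ≤ c⁻¹ * ρ' := by
                exact mul_le_mul_of_nonneg_left hz1 (inv_nonneg.2 hc0.le)
            _ = ρ := hcr
        · intro hmem
          simp only [hU, mem_iUnion, mem_closedBall] at hmem
          obtain ⟨y, hyt, hy⟩ := hmem
          apply hz2
          simp only [hU', mem_iUnion, mem_closedBall]
          refine ⟨y, hyt, ?_⟩
          have hzw : z - (a + c⁻¹ • (z - a)) = (1 - c⁻¹) • (z - a) := by
            rw [sub_smul, one_smul]; abel
          have h1 : dist z (a + c⁻¹ • (z - a)) ≤ (1 - c⁻¹) * ρ' := by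
            rw [dist_eq_norm, hzw, norm_smul, Real.norm_eq_abs,
              abs_of_nonneg (by linarith : (0:ℝ) ≤ 1 - c⁻¹)]
            have := mem_closedBall.1 hz1
            rw [dist_eq_norm] at this
            exact mul_le_mul_of_nonneg_left this (by linarith)
          calc dist z y ≤ dist z (a + c⁻¹ • (z - a)) + dist (a + c⁻¹ • (z - a)) y :=
                dist_triangle _ _ _
            _ ≤ (1 - c⁻¹) * ρ' + ρ := by
                exact add_le_add h1 hy
            _ = ρ' := by rw [sub_mul, one_mul, hcr]; ring
        · simp only [vadd_eq_add, smul_add, smul_smul]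
          rw [mul_inv_cancel₀ hc0.ne', one_smul]
          abel
      have himg : volume ((fun w => (a - c • a) +ᵥ c • w) '' (closedBall a ρ \ U)) =
          ENNReal.ofReal (c ^ d) * volume (closedBall a ρ \ U) := by
        have : (fun w : EuclideanSpace ℝ (Fin d) => (a - c • a) +ᵥ c • w) '' (closedBall a ρ \ U)
            = (a - c • a) +ᵥ c • (closedBall a ρ \ U) := by
          rw [← Set.image_smul, ← Set.image_vadd, Set.image_image]
        rw [this, measure_vadd, Measure.addHaar_smul_of_nonneg volume hc0.le,
          finrank_euclideanSpace_fin]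
      have step1 : volume (⋃ x ∈ insert a t, closedBall x ρ') = volume U' +
          volume (closedBall a ρ' \ U') := by
        rw [Finset.set_biUnion_insert, union_comm]
        exact (measure_add_diff hU'm.nullMeasurableSet _).symm
      have step2 : volume (⋃ x ∈ insert a t, closedBall x ρ) = volume U +
          volume (closedBall a ρ \ U) := by
        rw [Finset.set_biUnion_insert, union_comm]
        exact (measure_add_diff hUm.nullMeasurableSet _).symm
      rw [step1, step2, mul_add]
      refine add_le_add IH ?_
      calc volume (closedBall a ρ' \ U') ≤
            volume ((fun w => (a - c • a) +ᵥ c • w) '' (closedBall a ρ \ U)) :=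
            measure_mono key
        _ = ENNReal.ofReal (c ^ d) * volume (closedBall a ρ \ U) := himg


lemma smulUnitBall {d : ℕ} {s : ℝ} (hs : 0 ≤ s) :
    s • unitBall d = closedBall (0 : EuclideanSpace ℝ (Fin d)) s := by
  rw [unitBall, _root_.smul_closedBall _ _ zero_le_one]
  simp [abs_of_nonneg hs, Real.norm_eq_abs]

lemma add_ball_eq {d : ℕ} (A : Set (EuclideanSpace ℝ (Fin d))) {s : ℝ} (hs : 0 ≤ s) :
    A + s • unitBall d = ⋃ a ∈ A, closedBall a s := by
  rw [smulUnitBall hs]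
  ext z
  simp only [Set.mem_add, mem_iUnion, mem_closedBall, mem_closedBall_zero_iff]
  constructor
  · rintro ⟨a, ha, v, hv, rfl⟩
    exact ⟨a, ha, by simpa [dist_eq_norm] using hv⟩
  · rintro ⟨a, ha, hz⟩
    exact ⟨a, ha, z - a, by simpa [dist_eq_norm] using hz, by abel⟩

lemma ball_subset_add {d : ℕ} {A : Set (EuclideanSpace ℝ (Fin d))} {a} (ha : a ∈ A)
    {s : ℝ} (hs : 0 ≤ s) : closedBall a s ⊆ A + s • unitBall d := by
  rw [add_ball_eq A hs]
  exact Set.subset_biUnion_of_mem (u := fun a => closedBall a s) ha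

lemma kneser {d : ℕ} {A : Set (EuclideanSpace ℝ (Fin d))} (hA : IsCompact A)
    {r s : ℝ} (hr : 0 < r) (hrs : r ≤ s) :
    volume (A + s • unitBall d) ≤
      ENNReal.ofReal ((s / r) ^ d) * volume (A + r • unitBall d) := by
  have h0s : 0 ≤ s := le_trans hr.le hrs
  have hCne : volume (A + r • unitBall d) ≠ ⊤ := by
    rw [smulUnitBall hr.le]
    exact (hA.add (isCompact_closedBall _ _)).measure_lt_top.ne
  have step : ∀ s' ∈ Ioi s, volume (A + s • unitBall d) ≤
      ENNReal.ofReal ((s' / r) ^ d) * volume (A + r • unitBall d) := by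
    intro s' hs'
    rw [mem_Ioi] at hs'
    have hcover : (A + s • unitBall d) ⊆ ⋃ a ∈ A, ball a s' := by
      rw [add_ball_eq A h0s]
      intro z hz
      simp only [mem_iUnion, mem_closedBall, mem_ball] at hz ⊢
      obtain ⟨a, ha, hza⟩ := hz
      exact ⟨a, ha, lt_of_le_of_lt hza hs'⟩
    have hcpt : IsCompact (A + s • unitBall d) := by
      rw [smulUnitBall h0s]
      exact hA.add (isCompact_closedBall _ _)
    obtain ⟨T, hTA, hTfin, hTcover⟩ :=
      hcpt.elim_finite_subcover_image (fun a _ => isOpen_ball) hcover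
    calc volume (A + s • unitBall d)
        ≤ volume (⋃ a ∈ hTfin.toFinset, closedBall a s') := by
          refine measure_mono (hTcover.trans ?_)
          intro z hz
          simp only [mem_iUnion, mem_ball, mem_closedBall, Set.Finite.mem_toFinset] at hz ⊢
          obtain ⟨a, haT, hza⟩ := hz
          exact ⟨a, haT, hza.le⟩
      _ ≤ ENNReal.ofReal ((s' / r) ^ d) * volume (⋃ a ∈ hTfin.toFinset, closedBall a r) :=
          scaling_lemma d hr (hrs.trans hs'.le) _
      _ ≤ ENNReal.ofReal ((s' / r) ^ d) * volume (A + r • unitBall d) := by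
          refine mul_le_mul_right (measure_mono ?_) _
          refine iUnion₂_subset fun a ha => ?_
          exact ball_subset_add (hTA (hTfin.mem_toFinset.mp ha)) hr.le
  have htend : Tendsto (fun s' : ℝ => ENNReal.ofReal ((s' / r) ^ d) *
      volume (A + r • unitBall d)) (nhdsWithin s (Ioi s))
      (nhds (ENNReal.ofReal ((s / r) ^ d) * volume (A + r • unitBall d))) := by
    refine ENNReal.Tendsto.mul_const ?_ (Or.inr hCne)
    exact (ENNReal.continuous_ofReal.tendsto _).comp
      (((continuous_pow d).comp (continuous_id.div_const r)).tendsto s |>.mono_left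
        nhdsWithin_le_nhds)
  exact ge_of_tendsto htend ((eventually_mem_nhdsWithin).mono step)


lemma omegaVol_pos (d : ℕ) : 0 < omegaVol d := by
  apply div_pos (Real.rpow_pos_of_pos Real.pi_pos _)
  apply Real.Gamma_pos_of_pos
  positivity

lemma volume_closedBall_eq (d : ℕ) (hd1 : 1 ≤ d) (ρ : ℝ) (hρ : 0 ≤ ρ) :
    volume (closedBall (0 : EuclideanSpace ℝ (Fin d)) ρ) =
      ENNReal.ofReal (omegaVol d * ρ ^ d) := by
  haveI : Nonempty (Fin d) := ⟨⟨0, by omega⟩⟩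
  rw [EuclideanSpace.volume_closedBall]
  have h1 : (Real.sqrt Real.pi) ^ d = Real.pi ^ ((d : ℝ) / 2) := by
    rw [Real.sqrt_eq_rpow, ← Real.rpow_natCast (Real.pi ^ ((1:ℝ)/2)) d,
      ← Real.rpow_mul Real.pi_pos.le]
    norm_num
    ring_nf
  have h2 : Real.Gamma ((d : ℝ) / 2 + 1) = Real.Gamma (1 + (d : ℝ) / 2) := by ring_nf
  rw [Fintype.card_fin, h1, h2, ← ENNReal.ofReal_pow hρ, ← ENNReal.ofReal_mul (by positivity)]
  congr 1
  simp only [omegaVol]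
  ring

lemma vol_add_le {d : ℕ} (hd1 : 1 ≤ d) {A : Set (EuclideanSpace ℝ (Fin d))} {R s : ℝ}
    (hAsub : A ⊆ closedBall 0 R) (hs : 0 ≤ s) (hR : 0 ≤ R) :
    volume (A + s • unitBall d) ≤ ENNReal.ofReal (omegaVol d * (R + s) ^ d) := by
  rw [← volume_closedBall_eq d hd1 (R + s) (by linarith)]
  refine measure_mono ?_
  rw [add_ball_eq A hs]
  refine iUnion₂_subset fun a ha => ?_
  intro z hz
  rw [mem_closedBall] at *
  calc dist z (0 : EuclideanSpace ℝ (Fin d)) ≤ dist z a + dist a 0 := dist_triangle _ _ _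
    _ ≤ s + R := add_le_add hz (hAsub ha)
    _ = R + s := by ring

lemma pow_sub_pow_le' {a b : ℝ} (hb : 0 ≤ b) (hba : b ≤ a) (n : ℕ) :
    a ^ n - b ^ n ≤ (a - b) * n * a ^ (n - 1) := by
  induction n with
  | zero => simp
  | succ n IH =>
      have ha : 0 ≤ a := hb.trans hba
      have hbn : b ^ n ≤ a ^ n := pow_le_pow_left₀ hb hba n
      have key : a ^ (n + 1) - b ^ (n + 1) = a * (a ^ n - b ^ n) + (a - b) * b ^ n := by ring
      rw [key]
      have h1 : a * (a ^ n - b ^ n) ≤ a * ((a - b) * n * a ^ (n - 1)) :=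
        mul_le_mul_of_nonneg_left IH ha
      have h2 : a * ((a - b) * n * a ^ (n - 1)) = (a - b) * ((n : ℝ) * (a * a ^ (n - 1))) := by
        ring
      have h3 : (n : ℝ) * (a * a ^ (n - 1)) ≤ (n : ℝ) * a ^ n := by
        cases n with
        | zero => simp
        | succ m =>
            rw [Nat.add_sub_cancel, ← pow_succ']
      calc a * (a ^ n - b ^ n) + (a - b) * b ^ n
          ≤ (a - b) * ((n : ℝ) * (a * a ^ (n-1))) + (a - b) * a ^ n := by
            refine add_le_add (h1.trans (le_of_eq h2)) ?_
            exact mul_le_mul_of_nonneg_left hbn (by linarith)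
        _ ≤ (a - b) * ((n : ℝ) * a ^ n) + (a - b) * a ^ n := by
            refine add_le_add_left ?_ _
            exact mul_le_mul_of_nonneg_left h3 (by linarith)
        _ = (a - b) * (n + 1 : ℕ) * a ^ ((n+1) - 1) := by
            rw [Nat.add_sub_cancel]; push_cast; ring

lemma shell_bound {d : ℕ} (hd1 : 1 ≤ d) {A : Set (EuclideanSpace ℝ (Fin d))}
    (hA : IsCompact A) {R r : ℝ} (hr : 0 < r) (hrR : r ≤ R)
    (hAsub : A ⊆ closedBall 0 R) {δ' : ℝ} (hδ' : 0 < δ') :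
    volume (A + (r + δ') • unitBall d) - volume (A + r • unitBall d) ≤
      ENNReal.ofReal (((r + δ') ^ d - r ^ d) / r ^ d * (omegaVol d * (R + r) ^ d)) := by
  set m := volume (A + r • unitBall d) with hm
  set u : ℝ := ((r + δ') ^ d - r ^ d) / r ^ d with hu
  have hu0 : 0 ≤ u := by
    apply div_nonneg _ (by positivity)
    have : r ^ d ≤ (r + δ') ^ d := pow_le_pow_left₀ hr.le (by linarith) d
    linarith
  have hq : ((r + δ') / r) ^ d = 1 + u := by
    rw [hu, div_pow]
    field_simp
    ring
  have hD : volume (A + (r + δ') • unitBall d) ≤ ENNReal.ofReal (1 + u) * m := by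
    rw [← hq]
    exact kneser hA hr (by linarith)
  have hsplit : ENNReal.ofReal (1 + u) = 1 + ENNReal.ofReal u := by
    rw [ENNReal.ofReal_add zero_le_one hu0, ENNReal.ofReal_one]
  have hmb : m ≤ ENNReal.ofReal (omegaVol d * (R + r) ^ d) :=
    vol_add_le hd1 hAsub hr.le (by linarith)
  rw [tsub_le_iff_right]
  calc volume (A + (r + δ') • unitBall d) ≤ ENNReal.ofReal (1 + u) * m := hD
    _ = m + ENNReal.ofReal u * m := by rw [hsplit, add_mul, one_mul]
    _ ≤ m + ENNReal.ofReal u * ENNReal.ofReal (omegaVol d * (R + r) ^ d) :=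
        add_le_add_right (mul_le_mul_right hmb _) m
    _ = m + ENNReal.ofReal (u * (omegaVol d * (R + r) ^ d)) := by
        rw [ENNReal.ofReal_mul hu0]
    _ = ENNReal.ofReal (u * (omegaVol d * (R + r) ^ d)) + m := add_comm _ _


/-- For `d ≥ 2`, `R ≥ r > 0`, `δ > 0` and a nonempty closed
`A ⊆ B(0; R) ⊆ ℝ^d`:
`λ(A_{⊕(r+δ)} \ A_{⊕r}) ≤ ((R+r/2)^d/(r/2)^d) · 2^{d−1} ω_d ((r+δ)^d − r^d)` and
`λ̄(∂A_{⊕r}) ≤ ((R+r/2)^d/(r/2)^d) · 2^{d−1} d ω_d r^{d−1}`. -/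
theorem reverse_isoperimetric_bounded_ball
    (d : ℕ) (hd : 2 ≤ d) (R r δ : ℝ) (hr : 0 < r) (hRr : r ≤ R) (hδ : 0 < δ)
    (A : Set (EuclideanSpace ℝ (Fin d))) (hA : IsClosed A) (hAne : A.Nonempty)
    (hAsub : A ⊆ Metric.closedBall 0 R) :
    volume ((A + (r + δ) • unitBall d) \ (A + r • unitBall d)) ≤
      ENNReal.ofReal ((R + r / 2) ^ d / (r / 2) ^ d *
        (2 ^ (d - 1) * omegaVol d * ((r + δ) ^ d - r ^ d))) ∧
    upperSurf (unitBall d) (A + r • unitBall d) ≤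
      ENNReal.ofReal ((R + r / 2) ^ d / (r / 2) ^ d *
        (2 ^ (d - 1) * d * omegaVol d * r ^ (d - 1))) := by
  rw [upperSurf]
  have hd1 : 1 ≤ d := by omega
  have hAcpt : IsCompact A :=
    (isCompact_closedBall (0 : EuclideanSpace ℝ (Fin d)) R).of_isClosed_subset hA hAsub
  have hω : 0 ≤ omegaVol d := (omegaVol_pos d).le
  have hR0 : 0 < R := lt_of_lt_of_le hr hRr
  have hCcpt : IsCompact (A + r • unitBall d) := by
    rw [smulUnitBall hr.le]; exact hAcpt.add (isCompact_closedBall _ _)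
  have hCfin : volume (A + r • unitBall d) ≠ ⊤ := hCcpt.measure_lt_top.ne
  have hEq : (R + r / 2) ^ d / (r / 2) ^ d = (2 * R + r) ^ d / r ^ d := by
    rw [div_eq_div_iff (by positivity) (by positivity), ← mul_pow, ← mul_pow]
    congr 1
    ring
  have hbig : (R + r) ^ d ≤ 2 ^ (d - 1) * (2 * R + r) ^ d := by
    have h1 : (R + r) ^ d ≤ (2 * R + r) ^ d := pow_le_pow_left₀ (by linarith) (by linarith) d
    have h2 : (1 : ℝ) ≤ 2 ^ (d - 1) := one_le_pow₀ one_le_two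
    nlinarith [pow_nonneg (by linarith : (0:ℝ) ≤ 2*R + r) d]
  constructor
  · -- Part 1
    have hsub : (A + r • unitBall d) ⊆ (A + (r + δ) • unitBall d) := by
      apply Set.add_subset_add_left
      rw [smulUnitBall hr.le, smulUnitBall (by linarith : (0:ℝ) ≤ r + δ)]
      exact closedBall_subset_closedBall (by linarith)
    rw [measure_diff hsub hCcpt.isClosed.measurableSet.nullMeasurableSet hCfin]
    refine le_trans (shell_bound hd1 hAcpt hr hRr hAsub hδ) (ENNReal.ofReal_le_ofReal ?_)
    rw [hEq]
    have hΔ0 : 0 ≤ (r + δ) ^ d - r ^ d := by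
      have : r ^ d ≤ (r + δ) ^ d := pow_le_pow_left₀ hr.le (by linarith) d
      linarith
    have key : ((r + δ) ^ d - r ^ d) / r ^ d * (omegaVol d * (R + r) ^ d) ≤
        ((r + δ) ^ d - r ^ d) / r ^ d * (omegaVol d * (2 ^ (d-1) * (2 * R + r) ^ d)) := by
      gcongr
      all_goals first
        | exact div_nonneg hΔ0 (by positivity)
        | exact hbig
        | positivity
    refine key.trans (le_of_eq ?_)
    field_simp
    try ring
  · -- Part 2
    refine limsup_le_of_le (by isBoundedDefault) ?_
    filter_upwards [Ioc_mem_nhdsGT_of_mem (⟨le_refl (0:ℝ), hr⟩ : (0:ℝ) ∈ Ico 0 r)]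
      with δ' hδ'
    obtain ⟨hδ'0, hδ'r⟩ := hδ'
    have hassoc : (A + r • unitBall d) + δ' • unitBall d = A + (r + δ') • unitBall d := by
      rw [add_assoc]
      congr 1
      rw [smulUnitBall hr.le, smulUnitBall hδ'0.le, smulUnitBall (by linarith : (0:ℝ) ≤ r + δ'),
        closedBall_add_closedBall hr.le hδ'0.le]
      simp
    rw [hassoc, ENNReal.div_le_iff (ENNReal.ofReal_pos.2 hδ'0).ne' ENNReal.ofReal_ne_top]
    have hx2 : 0 ≤ (R + r / 2) ^ d / (r / 2) ^ d * (2 ^ (d - 1) * d * omegaVol d * r ^ (d - 1)) := by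
      apply mul_nonneg (by positivity)
      apply mul_nonneg (mul_nonneg (by positivity) hω) (by positivity)
    rw [← ENNReal.ofReal_mul hx2]
    refine le_trans (shell_bound hd1 hAcpt hr hRr hAsub hδ'0) (ENNReal.ofReal_le_ofReal ?_)
    -- real inequality
    have hΔle : (r + δ') ^ d - r ^ d ≤ δ' * (d * (2 ^ (d-1) * r ^ (d-1))) := by
      have h1 : (r + δ') ^ d - r ^ d ≤ ((r + δ') - r) * d * (r + δ') ^ (d - 1) :=
        pow_sub_pow_le' hr.le (by linarith) d
      have h2 : (r + δ') ^ (d - 1) ≤ (2 * r) ^ (d - 1) :=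
        pow_le_pow_left₀ (by linarith) (by linarith) _
      have h3 : (2 * r) ^ (d - 1) = 2 ^ (d-1) * r ^ (d-1) := mul_pow 2 r (d-1)
      calc (r + δ') ^ d - r ^ d ≤ ((r + δ') - r) * d * (r + δ') ^ (d - 1) := h1
        _ = δ' * d * (r + δ') ^ (d - 1) := by ring_nf
        _ ≤ δ' * d * (2 ^ (d-1) * r ^ (d-1)) := by
            rw [← h3]
            exact mul_le_mul_of_nonneg_left h2 (by positivity)
        _ = δ' * (d * (2 ^ (d-1) * r ^ (d-1))) := by ring
    have hΔ0 : 0 ≤ (r + δ') ^ d - r ^ d := by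
      have : r ^ d ≤ (r + δ') ^ d := pow_le_pow_left₀ hr.le (by linarith) d
      linarith
    rw [hEq]
    have hnum : ((r + δ') ^ d - r ^ d) / r ^ d ≤
        (δ' * (d * (2 ^ (d-1) * r ^ (d-1)))) / r ^ d := by
      gcongr
      all_goals first
        | exact pow_pos hr d
        | exact hΔle
        | positivity
    have hfac : omegaVol d * (R + r) ^ d ≤ omegaVol d * (2 * R + r) ^ d :=
      mul_le_mul_of_nonneg_left (pow_le_pow_left₀ (by linarith) (by linarith) d) hω
    calc ((r + δ') ^ d - r ^ d) / r ^ d * (omegaVol d * (R + r) ^ d)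
        ≤ (δ' * (d * (2 ^ (d-1) * r ^ (d-1)))) / r ^ d * (omegaVol d * (2*R + r) ^ d) :=
          mul_le_mul hnum hfac (mul_nonneg hω (by positivity)) (by positivity)
      _ = (2 * R + r) ^ d / r ^ d * (2 ^ (d - 1) * d * omegaVol d * r ^ (d - 1)) * δ' := by
          ring
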